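/- Let (X,d) be a compact metric space and f : X → X an arbitrary self-map. Then for every x ∈ X there exists a chain-recurrent point y ∈ X such that x is in chain relation with y, i.e., for every ε > 0 there is an ε-chain from x to y. -/
import Mathlib


open Filter Topology Set

variable {X : Type*}

section Defs
variable [PseudoMetricSpace X]

def IsEpsChain (f : X → X) (ε : ℝ) (n : ℕ) (c : ℕ → X) (x y : X) : Prop :=
  1 ≤ n ∧ c 0 = x ∧ c n = y ∧ ∀ i < n, dist (f (c i)) (c (i + 1)) < ε

def EpsChain (f : X → X) (ε : ℝ) (x y : X) : Prop :=
  ∃ n c, IsEpsChain f ε n c x y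

/-- The chain relation `x 𝒞 y`. -/
def ChainRel (f : X → X) (x y : X) : Prop :=
  ∀ ε > 0, EpsChain f ε x y

def EpsChainIn (f : X → X) (S : Set X) (ε : ℝ) (x y : X) : Prop :=
  ∃ n c, IsEpsChain f ε n c x y ∧ ∀ i ≤ n, c i ∈ S

def ChainRelIn (f : X → X) (S : Set X) (x y : X) : Prop :=
  ∀ ε > 0, EpsChainIn f S ε x y

def InternallyChainTransitive (f : X → X) (S : Set X) : Prop :=
  ∀ x ∈ S, ∀ y ∈ S, ∀ ε > 0, EpsChainIn f S ε x y

/-- The nested-chain relation `x 𝒞⊆ y`. -/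
def NestedChainRel (f : X → X) (x y : X) : Prop :=
  ∃ ε : ℕ → ℝ, (∀ n, 0 < ε n) ∧ Antitone ε ∧ Tendsto ε atTop (𝓝 0) ∧
    ∃ N : ℕ → ℕ, ∃ c : ℕ → ℕ → X,
      (∀ n, IsEpsChain f (ε n) (N n) (c n) x y) ∧
      ∀ n, c n '' Set.Iic (N n) ⊆ c (n + 1) '' Set.Iic (N (n + 1))

/-- The nested-chain relation with all chain points inside `S`. -/
def NestedChainRelIn (f : X → X) (S : Set X) (x y : X) : Prop :=
  ∃ ε : ℕ → ℝ, (∀ n, 0 < ε n) ∧ Antitone ε ∧ Tendsto ε atTop (𝓝 0) ∧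
    ∃ N : ℕ → ℕ, ∃ c : ℕ → ℕ → X,
      (∀ n, IsEpsChain f (ε n) (N n) (c n) x y ∧ ∀ i ≤ N n, c n i ∈ S) ∧
      ∀ n, c n '' Set.Iic (N n) ⊆ c (n + 1) '' Set.Iic (N (n + 1))

end Defs

/-- Strong `(ε,d)`-chain for an explicitly given distance function `d`. -/
def StrongEpsChainWith (d : X → X → ℝ) (f : X → X) (ε : ℝ) (x y : X) : Prop :=
  ∃ n, 1 ≤ n ∧ ∃ c : ℕ → X, c 0 = x ∧ c n = y ∧
    (∑ i ∈ Finset.range n, d (f (c i)) (c (i + 1))) < ε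

/-- The strong chain relation `x 𝒮𝒞_d y`. -/
def StrongChainRelWith (d : X → X → ℝ) (f : X → X) (x y : X) : Prop :=
  ∀ ε > 0, StrongEpsChainWith d f ε x y

section AuxLemmas
variable [PseudoMetricSpace X]

lemma epsChain_self_apply (f : X → X) {ε : ℝ} (hε : 0 < ε) (x : X) :
    EpsChain f ε x (f x) := by
  refine ⟨1, fun i => if i = 0 then x else f x, le_refl 1, by simp, by simp, ?_⟩
  intro i hi
  interval_cases i
  simpa using hε

lemma epsChain_trans {f : X → X} {ε : ℝ} {x y z : X}
    (h1 : EpsChain f ε x y) (h2 : EpsChain f ε y z) : EpsChain f ε x z := by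
  obtain ⟨n, c, hn, hc0, hcn, hcs⟩ := h1
  obtain ⟨m, d, hm, hd0, hdm, hds⟩ := h2
  refine ⟨n + m, fun i => if i ≤ n then c i else d (i - n), by omega, by simp [hc0],
    ?_, ?_⟩
  · have : ¬ (n + m ≤ n) := by omega
    simp [this, hdm]
  · intro i hi
    rcases lt_trichotomy i n with h | h | h
    · have h1 : i ≤ n := by omega
      have h2 : i + 1 ≤ n := by omega
      simpa [h1, h2] using hcs i h
    · subst h
      have h2 : ¬ (i + 1 ≤ i) := by omega
      have : i + 1 - i = 1 := by omega
      simp only [le_refl, if_pos, h2, if_neg, this, hcn, ← hd0]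
      exact hds 0 hm
    · have h1 : ¬ (i ≤ n) := by omega
      have h2 : ¬ (i + 1 ≤ n) := by omega
      have h3 : i + 1 - n = (i - n) + 1 := by omega
      simp only [h1, h2, if_neg, h3]
      exact hds (i - n) (by omega)

lemma epsChain_adjust {f : X → X} {ε δ : ℝ} {x w z : X}
    (h : EpsChain f ε x w) (hd : dist w z < δ) : EpsChain f (ε + δ) x z := by
  have hδ : 0 < δ := (dist_nonneg).trans_lt hd
  obtain ⟨n, c, hn, hc0, hcn, hcs⟩ := h
  refine ⟨n, fun i => if i = n then z else c i, hn, ?_, by simp, ?_⟩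
  · have : (0 : ℕ) ≠ n := by omega
    simp [this, hc0]
  · intro i hi
    have hin : i ≠ n := by omega
    by_cases h1 : i + 1 = n
    · simp only [hin, if_neg, h1, if_pos]
      calc dist (f (c i)) z ≤ dist (f (c i)) (c (i+1)) + dist (c (i+1)) z := dist_triangle _ _ _
        _ < ε + δ := by
            have h4 := hcs i hi
            rw [h1, hcn] at h4 ⊢
            exact add_lt_add h4 hd
    · simp only [hin, if_neg, h1, if_neg]
      exact lt_of_lt_of_le (hcs i hi) (by linarith)

lemma chainRel_trans {f : X → X} {x y z : X}
    (h1 : ChainRel f x y) (h2 : ChainRel f y z) : ChainRel f x z :=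
  fun ε hε => epsChain_trans (h1 ε hε) (h2 ε hε)

lemma isClosed_chainRel (f : X → X) (x : X) : IsClosed {z | ChainRel f x z} := by
  refine isClosed_of_closure_subset ?_
  intro z hz ε hε
  rw [Metric.mem_closure_iff] at hz
  obtain ⟨w, hw, hdw⟩ := hz (ε/2) (by linarith)
  have := epsChain_adjust (hw (ε/2) (by linarith)) (by rwa [dist_comm] at hdw)
  rwa [add_halves] at this

end AuxLemmas

theorem stmt1 [MetricSpace X] [CompactSpace X] (f : X → X) (x : X) :
    ∃ y : X, ChainRel f y y ∧ ChainRel f x y := by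
  classical
  set S : X → Set X := fun y => {z | ChainRel f y z} with hS
  set F : Set (Set X) := S '' {y | ChainRel f x y} with hF
  have hself : ∀ y : X, ChainRel f y (f y) := fun y ε hε => epsChain_self_apply f hε y
  have hmem : S (f x) ∈ F := ⟨f x, hself x, rfl⟩
  have hlb : ∀ c ⊆ F, IsChain (· ⊆ ·) c → c.Nonempty → ∃ lb ∈ F, ∀ s ∈ c, lb ⊆ s := by
    rintro c hcF hchain ⟨s₀, hs₀⟩
    haveI : Nonempty c := ⟨⟨s₀, hs₀⟩⟩
    have hZne : ∀ s : c, (s : Set X).Nonempty := by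
      rintro ⟨s, hs⟩
      obtain ⟨y, -, rfl⟩ := hcF hs
      exact ⟨f y, hself y⟩
    have hZcl : ∀ s : c, IsClosed (s : Set X) := by
      rintro ⟨s, hs⟩
      obtain ⟨y, -, rfl⟩ := hcF hs
      exact isClosed_chainRel f y
    have hdir : Directed (· ⊇ ·) (fun s : c => (s : Set X)) := by
      rintro ⟨s, hs⟩ ⟨t, ht⟩
      rcases eq_or_ne s t with h | h
      · exact ⟨⟨s, hs⟩, le_refl _, h ▸ le_refl _⟩
      · rcases hchain hs ht h with h' | h'
        · exact ⟨⟨s, hs⟩, le_refl _, h'⟩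
        · exact ⟨⟨t, ht⟩, h', le_refl _⟩
    obtain ⟨z, hzmem⟩ := IsCompact.nonempty_iInter_of_directed_nonempty_isCompact_isClosed
      _ hdir hZne (fun s => (hZcl s).isCompact) hZcl
    simp only [Set.mem_iInter] at hzmem
    obtain ⟨y₀, hxy₀, hSy₀⟩ := hcF hs₀
    have hxz : ChainRel f x z := by
      refine chainRel_trans hxy₀ ?_
      have h := hzmem ⟨_, hs₀⟩
      simp only [← hSy₀] at h
      exact h
    refine ⟨S z, ⟨z, hxz, rfl⟩, ?_⟩
    intro s hs
    obtain ⟨y, -, rfl⟩ := hcF hs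
    exact fun a ha => chainRel_trans (hzmem ⟨_, hs⟩) ha
  obtain ⟨m, -, hmF, hmin⟩ := zorn_superset_nonempty F hlb (S (f x)) hmem
  · obtain ⟨y₀, hxy₀, rfl⟩ := hmF
    set z := f y₀ with hz
    have hy₀z : ChainRel f y₀ z := hself y₀
    have hxz : ChainRel f x z := chainRel_trans hxy₀ hy₀z
    have hsub : S z ⊆ S y₀ := fun a ha => chainRel_trans hy₀z ha
    have hSzF : S z ∈ F := ⟨z, hxz, rfl⟩
    have : S y₀ ⊆ S z := hmin hSzF hsub
    exact ⟨z, this hy₀z, hxz⟩
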